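/- Let Γ₀ be an ADE Dynkin diagram, E₀ a chosen vertex, and Γ the triple Dynkin diagram obtained by giving E₀ weight 3. If the highest root Z(Γ₀) = Σ aᵢEᵢ of the root system of Γ₀ has coefficient a₀ = 1 at E₀, then the triple root system R(Γ) (divisors with self-intersection -2 or -3 under the Γ-form) coincides with the root system R(Γ₀). -/
import Mathlib

open Finset

def treeM (n : ℕ) (G : SimpleGraph (Fin n)) [DecidableRel G.Adj] (w : Fin n → ℤ)
    (i j : Fin n) : ℤ :=
  if i = j then -w i else if G.Adj i j then 1 else 0

def quadForm (n : ℕ) (M : Fin n → Fin n → ℤ) (Y : Fin n → ℤ) : ℤ :=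
  ∑ i, ∑ j, Y i * M i j * Y j

lemma treeM_symm (n : ℕ) (G : SimpleGraph (Fin n)) [DecidableRel G.Adj] (w : Fin n → ℤ)
    (i j : Fin n) : treeM n G w i j = treeM n G w j i := by
  unfold treeM
  by_cases h : i = j
  · subst h; simp
  · simp [h, Ne.symm h, G.adj_comm]

lemma even_quadForm (n : ℕ) (M : Fin n → Fin n → ℤ) (hs : ∀ i j, M i j = M j i)
    (hd : ∀ i, 2 ∣ M i i) (Y : Fin n → ℤ) : 2 ∣ quadForm n M Y := by
  have key : ((quadForm n M Y : ℤ) : ZMod 2) = 0 := by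
    unfold quadForm
    push_cast
    rw [← Finset.sum_product']
    apply Finset.sum_ninvolution (fun p => (p.2, p.1))
    · intro ⟨i, j⟩
      simp only
      rw [hs j i]
      have : ((Y i : ZMod 2)) * (M i j : ZMod 2) * (Y j) + (Y j) * (M i j) * (Y i) =
          2 * ((Y i) * (M i j) * (Y j)) := by ring
      rw [this]
      simp [ZMod.natCast_self 2]
      left
      exact (by decide : (2 : ZMod 2) = 0)
    · rintro ⟨i, j⟩ h
      simp only [ne_eq, Prod.mk.injEq, not_and]
      intro hji hij
      apply h
      rw [hij]
      obtain ⟨k, hk⟩ := hd j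
      have : ((M j j : ℤ) : ZMod 2) = 0 := by
        rw [hk]; push_cast; ring_nf
        simp [(by decide : (2 : ZMod 2) = 0)]
      rw [this]; ring
    · intro a; simp
    · intro a; simp
  exact (ZMod.intCast_zmod_eq_zero_iff_dvd _ 2).mp key

lemma quadForm_diff (n : ℕ) (G : SimpleGraph (Fin (n+1))) [DecidableRel G.Adj]
    (wΓ : Fin (n + 1) → ℤ) (hwΓ0 : wΓ 0 = 3) (hwΓ : ∀ i, i ≠ 0 → wΓ i = 2)
    (w₀ : Fin (n + 1) → ℤ) (hw₀ : ∀ i, w₀ i = 2) (Y : Fin (n+1) → ℤ) :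
    quadForm (n+1) (treeM (n+1) G wΓ) Y
      = quadForm (n+1) (treeM (n+1) G w₀) Y - (Y 0)^2 := by
  have hM : ∀ i j, treeM (n+1) G wΓ i j
      = treeM (n+1) G w₀ i j - (if i = 0 ∧ j = 0 then 1 else 0) := by
    intro i j
    unfold treeM
    by_cases hij : i = j
    · subst hij
      by_cases h0 : i = 0
      · subst h0; simp [hwΓ0, hw₀]
      · simp [hwΓ i h0, hw₀ i, h0]
    · have : ¬ (i = 0 ∧ j = 0) := by rintro ⟨rfl, rfl⟩; exact hij rfl
      simp [hij, this]
  unfold quadForm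
  have : ∀ i j, Y i * treeM (n+1) G wΓ i j * Y j
      = Y i * treeM (n+1) G w₀ i j * Y j - (if i = 0 ∧ j = 0 then Y i * Y j else 0) := by
    intro i j
    rw [hM i j]
    by_cases h : i = 0 ∧ j = 0 <;> simp [h] <;> ring
  simp_rw [this, Finset.sum_sub_distrib]
  congr 1
  have : ∀ i : Fin (n+1), (∑ j, if i = 0 ∧ j = 0 then Y i * Y j else 0)
      = if i = 0 then Y i * Y 0 else 0 := by
    intro i
    rw [Finset.sum_eq_single 0]
    · by_cases h : i = 0 <;> simp [h]
    · intro b _ hb; simp [hb]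
    · simp
  simp_rw [this]
  rw [Finset.sum_eq_single 0]
  · simp [sq]
  · intro b _ hb; simp [hb]
  · simp

lemma quadForm_neg (n : ℕ) (M : Fin n → Fin n → ℤ) (Y : Fin n → ℤ) :
    quadForm n M (-Y) = quadForm n M Y := by
  unfold quadForm
  congr 1; funext i; congr 1; funext j
  simp

/-- If the highest root `Z` of the ADE diagram `Γ₀` has coefficient `1` at the chosen
vertex `E₀` (vertex `0`), then the triple root system `R(Γ)` of the diagram `Γ`
obtained by giving `E₀` weight `3` coincides with the root system `R(Γ₀)`. -/
theorem stmt_4 (n : ℕ) (G : SimpleGraph (Fin (n + 1))) [DecidableRel G.Adj]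
    (hG : G.IsTree)
    (wΓ : Fin (n + 1) → ℤ) (hwΓ0 : wΓ 0 = 3) (hwΓ : ∀ i, i ≠ 0 → wΓ i = 2)
    (w₀ : Fin (n + 1) → ℤ) (hw₀ : ∀ i, w₀ i = 2)
    (hADE : ∀ x : Fin (n + 1) → ℤ, x ≠ 0 → quadForm (n + 1) (treeM (n + 1) G w₀) x < 0)
    (Z : Fin (n + 1) → ℤ)
    (hZroot : quadForm (n + 1) (treeM (n + 1) G w₀) Z = -2)
    (hZeff : ∀ i, 0 ≤ Z i)
    (hZhighest : ∀ Y : Fin (n + 1) → ℤ,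
      quadForm (n + 1) (treeM (n + 1) G w₀) Y = -2 → ∀ i, Y i ≤ Z i)
    (hZ0 : Z 0 = 1) :
    {Y : Fin (n + 1) → ℤ | quadForm (n + 1) (treeM (n + 1) G wΓ) Y = -2 ∨
      quadForm (n + 1) (treeM (n + 1) G wΓ) Y = -3}
    = {Y : Fin (n + 1) → ℤ | quadForm (n + 1) (treeM (n + 1) G w₀) Y = -2} := by
  have hsym : ∀ i j, treeM (n+1) G w₀ i j = treeM (n+1) G w₀ j i :=
    treeM_symm _ G w₀
  have hdiag : ∀ i, 2 ∣ treeM (n+1) G w₀ i i := by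
    intro i; unfold treeM; simp [hw₀ i]
  have heven := even_quadForm (n+1) (treeM (n+1) G w₀) hsym hdiag
  have hdiff := quadForm_diff n G wΓ hwΓ0 hwΓ w₀ hw₀
  ext Y
  simp only [Set.mem_setOf_eq]
  constructor
  · rintro (h | h) <;> rw [hdiff Y] at h
    · -- q₀ Y - Y0² = -2
      have hY0 : Y ≠ 0 := by
        rintro rfl
        simp [quadForm] at h
      have hlt := hADE Y hY0
      obtain ⟨k, hk⟩ := heven Y
      have hsq : 0 ≤ (Y 0)^2 := sq_nonneg _
      -- q₀ Y ≤ -2 since even & negative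
      have : quadForm (n+1) (treeM (n+1) G w₀) Y ≤ -2 := by omega
      have : (Y 0)^2 = 0 := by omega
      omega
    · have hY0 : Y ≠ 0 := by
        rintro rfl
        simp [quadForm] at h
      have hlt := hADE Y hY0
      obtain ⟨k, hk⟩ := heven Y
      have hsq : 0 ≤ (Y 0)^2 := sq_nonneg _
      have hle : quadForm (n+1) (treeM (n+1) G w₀) Y ≤ -2 := by omega
      -- Y0² = q₀ + 3 ≤ 1 ; q₀ even so q₀ = -2
      have h1 : (Y 0)^2 ≤ 1 := by omega
      have h2 : (Y 0)^2 = 0 ∨ (Y 0)^2 = 1 := by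
        have : 0 ≤ (Y 0)^2 := sq_nonneg _
        omega
      rcases h2 with h2 | h2 <;> omega
  · intro h
    rw [hdiff Y, h]
    have h1 : Y 0 ≤ 1 := by
      have := hZhighest Y h 0; omega
    have h2 : -1 ≤ Y 0 := by
      have hneg : quadForm (n+1) (treeM (n+1) G w₀) (-Y) = -2 := by
        rw [quadForm_neg]; exact h
      have := hZhighest (-Y) hneg 0
      simp at this
      omega
    have : (Y 0)^2 = 0 ∨ (Y 0)^2 = 1 := by
      interval_cases h : (Y 0) <;> simp
    omega
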